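/- If Γ_M ⊢ B is intuitionistically derivable, then P is unsound for M in the sense that there exists an atom R(ē) with R(ē) ∈ M but R(ē) ∉ I(P,M). -/

import Mathlib

namespace ASP

/-- A ground clause `head ← pos, ¬neg` of an answer set program. -/
structure GClause (α : Type) where
  head : α
  pos : List α
  neg : List α

variable {α : Type}

/-- Immediate-consequence operator of the Gelfond–Lifschitz reduct `P^M`:
`F(I) = I ∪ {a | some clause a ← a₁,…,aₙ of P^M has all aᵢ ∈ I}`. -/
def tcons (P : Set (GClause α)) (M : Set α) : Set α →o Set α where
  toFun I := I ∪ {a | ∃ c ∈ P, c.head = a ∧ (∀ b ∈ c.pos, b ∈ I) ∧ (∀ b ∈ c.neg, b ∉ M)}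
  monotone' := by
    intro I J h x hx
    rcases hx with hx | ⟨c, hc, h1, h2, h3⟩
    · exact Or.inl (h hx)
    · exact Or.inr ⟨c, hc, h1, fun b hb => h (h2 b hb), h3⟩

/-- The interpretation `I(P,M)`: least fixed point of the immediate-consequence
operator of the reduct `P^M`. -/
def interp (P : Set (GClause α)) (M : Set α) : Set α := OrderHom.lfp (tcons P M)

/-- `M` is a stable model (answer set) of `P` iff `M = I(P,M)`. -/
def IsStable (P : Set (GClause α)) (M : Set α) : Prop := M = interp P M

end ASP
namespace ASP

/-- Formulas of minimal implicational propositional logic over atoms `α`. -/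
inductive PForm (α : Type) where
  | at_ : α → PForm α
  | imp : PForm α → PForm α → PForm α

/-- Provability in minimal propositional logic (only → introduction/elimination). -/
inductive PPrv {α : Type} : Set (PForm α) → PForm α → Prop
  | ax {Γ : Set (PForm α)} {φ : PForm α} : φ ∈ Γ → PPrv Γ φ
  | impI {Γ : Set (PForm α)} {φ ψ : PForm α} : PPrv (insert φ Γ) ψ → PPrv Γ (.imp φ ψ)
  | impE {Γ : Set (PForm α)} {φ ψ : PForm α} : PPrv Γ (.imp φ ψ) → PPrv Γ φ → PPrv Γ ψ

end ASP
namespace TR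

/-- A ground atom `R(c̄)`: predicate index plus constant arguments. -/
structure GA where
  pred : ℕ
  args : List ℕ
deriving DecidableEq

/-- Atom alphabet of the translated formula φ: for every program predicate `R`
there are `R`, `R̄`, `R!`, `R?`; pair predicates `RP`; clause predicates `K⁰`
and nullary `K̄⁰`; and the nullary `•, ∘, A, B, ⊙`. -/
inductive At where
  | pos : GA → At
  | bar : GA → At
  | bang : GA → At
  | quest : GA → At
  | mem : GA → GA → At
  | k : ℕ → List ℕ → At
  | kbar : ℕ → At
  | bullet : At
  | circ : At
  | unsound : At
  | incomplete : At
  | lup : At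
deriving DecidableEq

abbrev F := ASP.PForm At

def av (a : At) : F := .at_ a

def imps (l : List F) (t : F) : F := l.foldr ASP.PForm.imp t

/-- Axioms (1): `(R(c̄)→⊙) → (R̄(c̄)→⊙) → ⊙`. -/
def ax1 (B : Set GA) : Set F :=
  {f | ∃ a ∈ B, f = .imp (.imp (av (.pos a)) (av .lup)) (.imp (.imp (av (.bar a)) (av .lup)) (av .lup))}

/-- Axioms (2): `Ω→⊙`, `A→⊙`, `B→⊙`. -/
def ax2 (ω : GA) : Set F :=
  {.imp (av (.pos ω)) (av .lup), .imp (av .unsound) (av .lup), .imp (av .incomplete) (av .lup)}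

/-- Axioms (3): `R̄(c̄) → (R!(c̄)→•) → A`. -/
def ax3 (B : Set GA) : Set F :=
  {f | ∃ a ∈ B, f = .imp (av (.bar a)) (.imp (.imp (av (.bang a)) (av .bullet)) (av .unsound))}

/-- Axioms (4): `R(c̄) → (R?(c̄)→∘) → B`. -/
def ax4 (B : Set GA) : Set F :=
  {f | ∃ a ∈ B, f = .imp (av (.pos a)) (.imp (.imp (av (.quest a)) (av .circ)) (av .incomplete))}

/-- Axiom (5) for a ground clause `R(ē) ← P₁(c̄₁),…,P_r(c̄_r), ¬S₁(d̄₁),…,¬S_s(d̄_s)`: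
`R!(ē) → (P₁!(c̄₁)→•) → ⋯ → (P_r!(c̄_r)→•) → S̄₁(d̄₁) → ⋯ → S̄_s(d̄_s) → •`. -/
def clax (c : ASP.GClause GA) : F :=
  .imp (av (.bang c.head))
    (imps (c.pos.map (fun b => .imp (av (.bang b)) (av .bullet)) ++
           c.neg.map (fun s => av (.bar s))) (av .bullet))

def ax5 (Pg : List (ASP.GClause GA)) : Set F := {f | ∃ c ∈ Pg, f = clax c}

/-- Axioms (6): `R?(c̄) → (K⁰₁(c̄)→K̄⁰₁) → ⋯ → (K⁰_l(c̄)→K̄⁰_l) → ∘`,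
where K₁,…,K_l are all clauses whose target predicate is that of the atom. -/
def ax6 (Pg : List (ASP.GClause GA)) (B : Set GA) : Set F :=
  {f | ∃ a ∈ B, f = .imp (av (.quest a))
    (imps (((Pg.zipIdx.map Prod.swap).filter (fun jc => jc.2.head.pred == a.pred)).map
      (fun jc => ASP.PForm.imp (av (.k jc.1 a.args)) (av (.kbar jc.1)))) (av .circ))}

/-- Axioms (7)-(8): a mismatch between the queried arguments and the clause head
arguments immediately yields `K⁰(c̄) → K̄⁰`. -/
def ax7 (Pg : List (ASP.GClause GA)) (B : Set GA) : Set F :=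
  {f | ∃ jc ∈ (Pg.zipIdx.map Prod.swap), ∃ a ∈ B, a.pred = jc.2.head.pred ∧ a.args ≠ jc.2.head.args ∧
    f = .imp (av (.k jc.1 a.args)) (av (.kbar jc.1))}

/-- Axioms (10): `K⁰(ē) → (P?(c̄) → RP(ē,c̄) → ∘) → K̄⁰`, for each positive body atom. -/
def ax10 (Pg : List (ASP.GClause GA)) : Set F :=
  {f | ∃ jc ∈ (Pg.zipIdx.map Prod.swap), ∃ b ∈ jc.2.pos, f = .imp (av (.k jc.1 jc.2.head.args))
    (.imp (.imp (av (.quest b)) (.imp (av (.mem jc.2.head b)) (av .circ))) (av (.kbar jc.1)))}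

/-- Axioms (11): `K⁰(ē) → S(d̄) → K̄⁰`, for each negative body atom `¬S(d̄)`. -/
def ax11 (Pg : List (ASP.GClause GA)) : Set F :=
  {f | ∃ jc ∈ (Pg.zipIdx.map Prod.swap), ∃ s ∈ jc.2.neg, f = .imp (av (.k jc.1 jc.2.head.args))
    (.imp (av (.pos s)) (av (.kbar jc.1)))}

/-- Axioms (12): transitivity `RP(ā,b̄) → PQ(b̄,c̄) → (RQ(ā,c̄)→∘) → ∘`. -/
def ax12 (B : Set GA) : Set F :=
  {f | ∃ a ∈ B, ∃ b ∈ B, ∃ c ∈ B, f = .imp (av (.mem a b)) (.imp (av (.mem b c))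
    (.imp (.imp (av (.mem a c)) (av .circ)) (av .circ)))}

/-- Axioms (13): loop detection `PP(ā,ā) → ∘`. -/
def ax13 (B : Set GA) : Set F := {f | ∃ a ∈ B, f = .imp (av (.mem a a)) (av .circ)}

/-- All axioms of the translated formula φ. -/
def Axioms (Pg : List (ASP.GClause GA)) (B : Set GA) (ω : GA) : Set F :=
  ax1 B ∪ ax2 ω ∪ ax3 B ∪ ax4 B ∪ ax5 Pg ∪ ax6 Pg B ∪ ax7 Pg B ∪
    ax10 Pg ∪ ax11 Pg ∪ ax12 B ∪ ax13 B

/-- `Γ_M`: the union of `M ∪ M̄` with the axioms of φ. -/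
def GammaM (Pg : List (ASP.GClause GA)) (B : Set GA) (ω : GA) (M : Set GA) : Set F :=
  Axioms Pg B ω ∪ {f | ∃ a ∈ M, f = av (.pos a)} ∪ {f | ∃ a ∈ B, a ∉ M ∧ f = av (.bar a)}

/-- The implicational formula of a clause of `P̄` (negative atoms replaced by barred ones). -/
def cbarF (c : ASP.GClause GA) : F :=
  imps (c.pos.map (fun b => av (.pos b)) ++ c.neg.map (fun s => av (.bar s))) (av (.pos c.head))

/-- The environment `P̄ ∪ M̄`. -/
def PbarMbar (Pg : List (ASP.GClause GA)) (B : Set GA) (M : Set GA) : Set F :=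
  {f | ∃ c ∈ Pg, f = cbarF c} ∪ {f | ∃ a ∈ B, a ∉ M ∧ f = av (.bar a)}

def progSet (Pg : List (ASP.GClause GA)) : Set (ASP.GClause GA) := {c | c ∈ Pg}

/-- All atoms of the program lie in the Herbrand base `B`. -/
def WfProg (Pg : List (ASP.GClause GA)) (B : Set GA) : Prop :=
  ∀ c ∈ Pg, c.head ∈ B ∧ (∀ b ∈ c.pos, b ∈ B) ∧ (∀ s ∈ c.neg, s ∈ B)

end TR

namespace Stmt12Aux
open ASP TR

/-- Classical truth-valuation semantics for minimal implicational logic. -/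
def eval (v : At → Prop) : F → Prop
  | .at_ a => v a
  | .imp φ ψ => eval v φ → eval v ψ

theorem sound (v : At → Prop) :
    ∀ {Γ : Set F} {φ : F}, ASP.PPrv Γ φ → (∀ ψ ∈ Γ, eval v ψ) → eval v φ := by
  intro Γ φ h
  induction h with
  | ax hmem => intro hΓ; exact hΓ _ hmem
  | impI _ ih =>
    intro hΓ hx
    exact ih (fun ψ hψ => hψ.elim (fun e => e ▸ hx) (hΓ ψ))
  | impE _ _ ih1 ih2 => intro hΓ; exact ih1 hΓ (ih2 hΓ)

theorem eval_imps_of_target {v : At → Prop} {t : F} (ht : eval v t) :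
    ∀ L : List F, eval v (imps L t)
  | [] => ht
  | _ :: L => fun _ => eval_imps_of_target ht L

theorem eval_imps_of_false {v : At → Prop} {t g : F} (hg : ¬ eval v g) :
    ∀ L : List F, g ∈ L → eval v (imps L t)
  | f :: L, hm => by
    rcases List.mem_cons.1 hm with rfl | hm
    · exact fun hf => absurd hf hg
    · exact fun _ => eval_imps_of_false hg L hm

variable (Pg : List (ASP.GClause GA)) (M : Set GA)

/-- Stages of the least fixed point. -/
def Fn (n : ℕ) : Set GA := (ASP.tcons (TR.progSet Pg) M)^[n] ∅

theorem Fn_succ (n : ℕ) : Fn Pg M (n + 1) = ASP.tcons (TR.progSet Pg) M (Fn Pg M n) :=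
  Function.iterate_succ_apply' _ _ _

theorem Fn_mono : Monotone (Fn Pg M) := by
  apply monotone_nat_of_le_succ
  intro n
  induction n with
  | zero => intro a ha; exact absurd ha (by simp [Fn])
  | succ n ih =>
    rw [Fn_succ, Fn_succ]
    exact (ASP.tcons (TR.progSet Pg) M).monotone ih

theorem Fn_le_interp (n : ℕ) : Fn Pg M n ⊆ ASP.interp (TR.progSet Pg) M := by
  induction n with
  | zero => intro a ha; exact absurd ha (by simp [Fn])
  | succ n ih =>
    rw [Fn_succ]
    calc ASP.tcons (TR.progSet Pg) M (Fn Pg M n)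
        ⊆ ASP.tcons (TR.progSet Pg) M (ASP.interp (TR.progSet Pg) M) :=
          (ASP.tcons (TR.progSet Pg) M).monotone ih
      _ = ASP.interp (TR.progSet Pg) M := OrderHom.map_lfp _

theorem exists_bound : ∀ l : List GA, (∀ b ∈ l, ∃ n, b ∈ Fn Pg M n) →
    ∃ N, ∀ b ∈ l, b ∈ Fn Pg M N
  | [], _ => ⟨0, by simp⟩
  | b :: l, h => by
    obtain ⟨N, hN⟩ := exists_bound l (fun x hx => h x (List.mem_cons_of_mem _ hx))
    obtain ⟨n, hn⟩ := h b List.mem_cons_self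
    refine ⟨max n N, fun x hx => ?_⟩
    rcases List.mem_cons.1 hx with rfl | hx
    · exact Fn_mono Pg M (le_max_left _ _) hn
    · exact Fn_mono Pg M (le_max_right _ _) (hN x hx)

theorem interp_subset_iUnion :
    ASP.interp (TR.progSet Pg) M ⊆ {a | ∃ n, a ∈ Fn Pg M n} := by
  apply OrderHom.lfp_le
  intro a ha
  rcases ha with ha | ⟨c, hc, hh, hpos, hneg⟩
  · exact ha
  · obtain ⟨N, hN⟩ := exists_bound Pg M c.pos hpos
    exact ⟨N + 1, by rw [Fn_succ]; exact Or.inr ⟨c, hc, hh, hN, hneg⟩⟩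

open Classical

/-- Stage of an atom in the least fixed point. -/
noncomputable def stg (a : GA) : ℕ :=
  if h : ∃ n, a ∈ Fn Pg M n then Nat.find h else 0

theorem interp_elim {a : GA} (ha : a ∈ ASP.interp (TR.progSet Pg) M) :
    ∃ c ∈ Pg, c.head = a ∧
      (∀ b ∈ c.pos, b ∈ ASP.interp (TR.progSet Pg) M ∧ stg Pg M b < stg Pg M a) ∧
      (∀ s ∈ c.neg, s ∉ M) := by
  have hex : ∃ n, a ∈ Fn Pg M n := interp_subset_iUnion Pg M ha
  have hstg : stg Pg M a = Nat.find hex := dif_pos hex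
  have hmem : a ∈ Fn Pg M (Nat.find hex) := Nat.find_spec hex
  rcases hn : Nat.find hex with _ | m
  · rw [hn] at hmem; exact absurd hmem (by simp [Fn])
  · rw [hn, Fn_succ] at hmem
    rcases hmem with hmem | ⟨c, hc, hh, hpos, hneg⟩
    · exact absurd hmem (Nat.find_min hex (by omega))
    · refine ⟨c, hc, hh, fun b hb => ?_, hneg⟩
      have hbm : b ∈ Fn Pg M m := hpos b hb
      have hbex : ∃ n, b ∈ Fn Pg M n := ⟨m, hbm⟩
      have : stg Pg M b = Nat.find hbex := dif_pos hbex
      refine ⟨Fn_le_interp Pg M m hbm, ?_⟩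
      rw [this, hstg, hn]
      exact Nat.lt_succ_of_le (Nat.find_le hbm)

/-- `j` indexes a clause witnessing the derivation of `a` in the reduct. -/
def Wit (j : ℕ) (a : GA) : Prop :=
  ∃ c, Pg[j]? = some c ∧ c.head = a ∧
    (∀ b ∈ c.pos, b ∈ ASP.interp (TR.progSet Pg) M ∧ stg Pg M b < stg Pg M a) ∧
    (∀ s ∈ c.neg, s ∉ M)

theorem exists_wit {a : GA} (ha : a ∈ ASP.interp (TR.progSet Pg) M) :
    ∃ j, Wit Pg M j a := by
  obtain ⟨c, hc, hprops⟩ := interp_elim Pg M ha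
  obtain ⟨j, hj⟩ := List.mem_iff_getElem?.1 hc
  exact ⟨j, c, by simpa using hj, hprops⟩

/-- The countermodel valuation. -/
noncomputable def val : At → Prop
  | .pos a => a ∈ M
  | .bar _ => True
  | .bang _ => True
  | .quest a => a ∈ ASP.interp (TR.progSet Pg) M
  | .mem a b => a ∈ ASP.interp (TR.progSet Pg) M ∧ b ∈ ASP.interp (TR.progSet Pg) M ∧
      stg Pg M b < stg Pg M a
  | .k j args => ∃ a, a ∈ ASP.interp (TR.progSet Pg) M ∧ Wit Pg M j a ∧ args = a.args
  | .kbar _ => False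
  | .bullet => True
  | .circ => False
  | .unsound => True
  | .incomplete => False
  | .lup => True

theorem gamma_true (Pg : List (ASP.GClause GA)) (B : Set GA) (ω : GA) (M : Set GA)
    (hMI : M ⊆ ASP.interp (TR.progSet Pg) M) :
    ∀ ψ ∈ TR.GammaM Pg B ω M, eval (val Pg M) ψ := by
  intro ψ hψ
  rcases hψ with (hax | ⟨a, ha, rfl⟩) | ⟨a, _, _, rfl⟩
  rotate_left
  · exact ha
  · trivial
  rcases hax with (((((((((h1 | h2) | h3) | h4) | h5) | h6) | h7) | h10) | h11) | h12) | h13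
  · -- ax1
    obtain ⟨a, _, rfl⟩ := h1
    exact fun _ _ => trivial
  · -- ax2
    simp only [ax2, Set.mem_insert_iff, Set.mem_singleton_iff] at h2
    rcases h2 with rfl | rfl | rfl <;> exact fun _ => trivial
  · -- ax3
    obtain ⟨a, _, rfl⟩ := h3
    exact fun _ _ => trivial
  · -- ax4
    obtain ⟨a, _, rfl⟩ := h4
    exact fun hm hq => hq (hMI hm)
  · -- ax5
    obtain ⟨c, _, rfl⟩ := h5
    exact fun _ => eval_imps_of_target (show eval (val Pg M) (av .bullet) from trivial) _
  · -- ax6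
    obtain ⟨a, _, rfl⟩ := h6
    intro ha
    obtain ⟨j, hw⟩ := exists_wit Pg M ha
    obtain ⟨c, hjc, hhead, hp, hn⟩ := hw
    refine eval_imps_of_false
      (g := ASP.PForm.imp (av (.k j a.args)) (av (.kbar j))) ?_ _ ?_
    · intro hg
      exact hg ⟨a, ha, ⟨c, hjc, hhead, hp, hn⟩, rfl⟩
    · apply List.mem_map.2
      refine ⟨(j, c), List.mem_filter.2 ⟨List.mem_map.2 ⟨(c, j), List.mem_zipIdx_iff_getElem?.2 hjc, rfl⟩, ?_⟩, rfl⟩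
      simp [hhead]
  · -- ax7
    obtain ⟨jc, hjc, a, _, hpred, hargs, rfl⟩ := h7
    intro hk
    obtain ⟨a', ha', ⟨c', hc', hhead', _, _⟩, hargsa⟩ := hk
    have he : c' = jc.2 := by
      have h2 : Pg[jc.1]? = some jc.2 := by
          obtain ⟨x, hx, rfl⟩ := List.mem_map.1 hjc; exact List.mem_zipIdx_iff_getElem?.1 hx
      rw [hc'] at h2
      exact Option.some.inj h2
    exact hargs (by rw [hargsa, ← hhead', he])
  · -- ax10
    obtain ⟨jc, hjc, b, hb, rfl⟩ := h10
    intro hk hX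
    obtain ⟨a', ha', ⟨c', hc', hhead', hp, hn⟩, _⟩ := hk
    have he : c' = jc.2 := by
      have h2 : Pg[jc.1]? = some jc.2 := by
          obtain ⟨x, hx, rfl⟩ := List.mem_map.1 hjc; exact List.mem_zipIdx_iff_getElem?.1 hx
      rw [hc'] at h2
      exact Option.some.inj h2
    have hbI := hp b (by rw [he]; exact hb)
    refine hX hbI.1 ⟨?_, hbI.1, ?_⟩
    · rw [← he, hhead']; exact ha'
    · rw [← he, hhead']; exact hbI.2
  · -- ax11
    obtain ⟨jc, hjc, s, hs, rfl⟩ := h11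
    intro hk hsM
    obtain ⟨a', _, ⟨c', hc', _, _, hn⟩, _⟩ := hk
    have he : c' = jc.2 := by
      have h2 : Pg[jc.1]? = some jc.2 := by
          obtain ⟨x, hx, rfl⟩ := List.mem_map.1 hjc; exact List.mem_zipIdx_iff_getElem?.1 hx
      rw [hc'] at h2
      exact Option.some.inj h2
    exact hn s (by rw [he]; exact hs) hsM
  · -- ax12
    obtain ⟨a, _, b, _, c, _, rfl⟩ := h12
    exact fun h1 h2 h3 => h3 ⟨h1.1, h2.2.1, h2.2.2.trans h1.2.2⟩
  · -- ax13
    obtain ⟨a, _, rfl⟩ := h13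
    exact fun h1 => absurd h1.2.2 (lt_irrefl _)

end Stmt12Aux

/-- If `Γ_M ⊢ B` is derivable then some atom `R(ē)` satisfies `R(ē) ∈ M` but
`R(ē) ∉ I(P,M)`. -/
theorem stmt12 (Pg : List (ASP.GClause TR.GA)) (B : Set TR.GA) (ω : TR.GA)
    (M : Set TR.GA) (hW : TR.WfProg Pg B) (hM : M ⊆ B)
    (h : ASP.PPrv (TR.GammaM Pg B ω M) (TR.av .incomplete)) :
    ∃ a ∈ M, a ∉ ASP.interp (TR.progSet Pg) M := by
  by_contra hcon
  push_neg at hcon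
  exact Stmt12Aux.sound (Stmt12Aux.val Pg M) h (Stmt12Aux.gamma_true Pg B ω M hcon)
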